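/- ℓ₂ to ℓ∞ bound from storage function: Suppose 𝒳 ≻ 0 is a symmetric matrix, ξ(t+1) evolves with ξ(0) = 0, and for all t: γ·u(t)ᵀu(t) + ξ(t)ᵀ𝒳ξ(t) − ξ(t+1)ᵀ𝒳ξ(t+1) ≥ 0 for some γ > 0. Moreover suppose the block matrix [[𝒳, Cᵀ],[C, γI]] ⪰ 0 for a matrix C. Then the signal e(t) = C ξ(t) satisfies ‖e(t)‖₂² ≤ γ² ∑_{i=0}^{t−1} ‖u(i)‖₂² for all t ≥ 1. -/

import Mathlib

open Matrix

lemma key_quad {n p : ℕ} (𝒳 : Matrix (Fin n) (Fin n) ℝ)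
    (C : Matrix (Fin p) (Fin n) ℝ) (γ : ℝ) (hγ : 0 < γ)
    (h2 : (Matrix.fromBlocks 𝒳 Cᵀ C (γ • (1 : Matrix (Fin p) (Fin p) ℝ))).PosSemidef)
    (x : Fin n → ℝ) :
    (C *ᵥ x) ⬝ᵥ (C *ᵥ x) ≤ γ * (x ⬝ᵥ (𝒳 *ᵥ x)) := by
  have h := h2.dotProduct_mulVec_nonneg (Sum.elim x (-(γ⁻¹ • (C *ᵥ x))))
  rw [fromBlocks_mulVec, dotProduct_block] at h
  simp only [Sum.elim_comp_inl, Sum.elim_comp_inr, Sum.elim_inl, Sum.elim_inr,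
    star_trivial, RCLike.re_to_real] at h
  have hx : x ⬝ᵥ (Cᵀ *ᵥ (-(γ⁻¹ • (C *ᵥ x)))) = -(γ⁻¹ * ((C *ᵥ x) ⬝ᵥ (C *ᵥ x))) := by
    rw [mulVec_neg, mulVec_smul, dotProduct_neg, dotProduct_smul]
    rw [mulVec_transpose, dotProduct_comm, dotProduct_mulVec]
    simp [smul_eq_mul]
  have hy : (-(γ⁻¹ • (C *ᵥ x))) ⬝ᵥ (C *ᵥ x + (γ • (1 : Matrix (Fin p) (Fin p) ℝ)) *ᵥ
      (-(γ⁻¹ • (C *ᵥ x)))) = -(γ⁻¹ * ((C *ᵥ x) ⬝ᵥ (C *ᵥ x)))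
      + γ⁻¹ * ((C *ᵥ x) ⬝ᵥ (C *ᵥ x)) := by
    rw [smul_mulVec, one_mulVec]
    simp only [neg_dotProduct, smul_dotProduct, dotProduct_add, dotProduct_neg,
      dotProduct_smul, smul_eq_mul, smul_neg, neg_neg]
    field_simp
  rw [dotProduct_add, hx, hy] at h
  have h3 : γ⁻¹ * ((C *ᵥ x) ⬝ᵥ (C *ᵥ x)) ≤ x ⬝ᵥ (𝒳 *ᵥ x) := by linarith
  have := mul_le_mul_of_nonneg_left h3 hγ.le
  rw [← mul_assoc, mul_inv_cancel₀ hγ.ne', one_mul] at this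
  exact this

theorem l2_to_linf_from_storage {n nu p : ℕ}
    (𝒳 : Matrix (Fin n) (Fin n) ℝ) (h𝒳 : 𝒳.PosDef)
    (C : Matrix (Fin p) (Fin n) ℝ) (γ : ℝ) (hγ : 0 < γ)
    (ξ : ℕ → Fin n → ℝ) (u : ℕ → Fin nu → ℝ)
    (h0 : ξ 0 = 0)
    (h1 : ∀ t : ℕ,
      0 ≤ γ * (u t ⬝ᵥ u t) + ξ t ⬝ᵥ (𝒳 *ᵥ ξ t) - ξ (t + 1) ⬝ᵥ (𝒳 *ᵥ ξ (t + 1)))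
    (h2 : (Matrix.fromBlocks 𝒳 Cᵀ C (γ • (1 : Matrix (Fin p) (Fin p) ℝ))).PosSemidef) :
    ∀ t : ℕ, 1 ≤ t →
      (C *ᵥ ξ t) ⬝ᵥ (C *ᵥ ξ t) ≤ γ ^ 2 * ∑ i ∈ Finset.range t, u i ⬝ᵥ u i := by
  have hstore : ∀ t : ℕ, ξ t ⬝ᵥ (𝒳 *ᵥ ξ t) ≤ γ * ∑ i ∈ Finset.range t, u i ⬝ᵥ u i := by
    intro t
    induction t with
    | zero => simp [h0]
    | succ t ih =>
      have := h1 t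
      rw [Finset.sum_range_succ, mul_add]
      linarith
  intro t _
  have hkey := key_quad 𝒳 C γ hγ h2 (ξ t)
  have := mul_le_mul_of_nonneg_left (hstore t) hγ.le
  calc (C *ᵥ ξ t) ⬝ᵥ (C *ᵥ ξ t) ≤ γ * (ξ t ⬝ᵥ (𝒳 *ᵥ ξ t)) := hkey
    _ ≤ γ * (γ * ∑ i ∈ Finset.range t, u i ⬝ᵥ u i) := this
    _ = γ ^ 2 * ∑ i ∈ Finset.range t, u i ⬝ᵥ u i := by ring
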